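/- For every partition ν, the following identity holds in the ring ℤ[x, x⁻¹] of Laurent polynomials: Σ_{i=1}^{ℓ(ν)} (x^{ν_i − i} − x^{−i}) + Σ_{j=1}^{ν_1} (x^{j − νᵀ_j − 1} − x^{j−1}) = 0. -/

import Mathlib

/-- A partition: a non-increasing sequence of non-negative integers
with only finitely many nonzero terms.  `part i` is the part `ν_{i+1}`
(0-based indexing). -/
structure NPartition where
  part : ℕ → ℕ
  antitone : ∀ ⦃i j : ℕ⦄, i ≤ j → part j ≤ part i
  eventually_zero : ∃ N : ℕ, ∀ i : ℕ, N ≤ i → part i = 0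

/-- The conjugate partition: `conj f j = #{i ≥ 1 : f_i ≥ j+1}`
(0-based: this is `(fᵀ)_{j+1}`). -/
noncomputable def conj (f : ℕ → ℕ) (j : ℕ) : ℕ :=
  Nat.card {i : ℕ // j + 1 ≤ f i}

/-- The number of nonzero parts `ℓ(ν)`. -/
noncomputable def plen (f : ℕ → ℕ) : ℕ :=
  Nat.card {i : ℕ // f i ≠ 0}

lemma initial_seg {S : Set ℕ} (hfin : S.Finite)
    (hdc : ∀ ⦃i j : ℕ⦄, i ≤ j → j ∈ S → i ∈ S) (i : ℕ) :
    i ∈ S ↔ i < Nat.card S := by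
  have hcard : Nat.card S = hfin.toFinset.card := by
    rw [Nat.card_eq_card_finite_toFinset hfin]
  constructor
  · intro hi
    have hsub : Finset.range (i + 1) ⊆ hfin.toFinset := by
      intro k hk
      simp only [Finset.mem_range] at hk
      simp only [Set.Finite.mem_toFinset]
      exact hdc (Nat.lt_succ_iff.mp hk) hi
    have := Finset.card_le_card hsub
    simp [Finset.card_range] at this
    omega
  · intro hi
    by_contra hmem
    have hsub : hfin.toFinset ⊆ Finset.range i := by
      intro k hk
      simp only [Set.Finite.mem_toFinset] at hk
      simp only [Finset.mem_range]
      by_contra hki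
      exact hmem (hdc (Nat.le_of_not_lt hki) hk)
    have := Finset.card_le_card hsub
    simp [Finset.card_range] at this
    omega

lemma plen_lt_iff (ν : NPartition) (i : ℕ) : i < plen ν.part ↔ ν.part i ≠ 0 := by
  obtain ⟨N, hN⟩ := ν.eventually_zero
  have hfin : {i : ℕ | ν.part i ≠ 0}.Finite := by
    apply Set.Finite.subset (Set.finite_Iio N)
    intro k hk
    simp only [Set.mem_setOf_eq] at hk
    simp only [Set.mem_Iio]
    by_contra h
    exact hk (hN k (Nat.le_of_not_lt h))
  have := initial_seg hfin (fun i j hij hj => by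
    simp only [Set.mem_setOf_eq] at *
    have := ν.antitone hij
    omega) i
  have hrfl : plen ν.part = Nat.card {i | ν.part i ≠ 0} := rfl
  simp only [Set.mem_setOf_eq] at this
  rw [hrfl]
  tauto

lemma conj_lt_iff (ν : NPartition) (j i : ℕ) : i < conj ν.part j ↔ j < ν.part i := by
  obtain ⟨N, hN⟩ := ν.eventually_zero
  have hfin : {i : ℕ | j + 1 ≤ ν.part i}.Finite := by
    apply Set.Finite.subset (Set.finite_Iio N)
    intro k hk
    simp only [Set.mem_setOf_eq] at hk
    simp only [Set.mem_Iio]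
    by_contra h
    have := hN k (Nat.le_of_not_lt h)
    omega
  have := initial_seg hfin (fun i j' hij hj => by
    simp only [Set.mem_setOf_eq] at *
    have := ν.antitone hij
    omega) i
  simp only [Set.mem_setOf_eq] at this
  have hrfl : conj ν.part j = Nat.card {i | j + 1 ≤ ν.part i} := rfl
  omega

open LaurentPolynomial in
/-- In ℤ[x, x⁻¹]:
`Σ_{i=1}^{ℓ(ν)} (x^{ν_i − i} − x^{−i}) + Σ_{j=1}^{ν_1} (x^{j − νᵀ_j − 1} − x^{j−1}) = 0`
(written with 0-based indexing, `T n = x^n`). -/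
theorem laurent_beta_identity (ν : NPartition) :
    (∑ i ∈ Finset.range (plen ν.part),
        (T ((ν.part i : ℤ) - (i : ℤ) - 1) - T (-(i : ℤ) - 1))) +
    (∑ j ∈ Finset.range (ν.part 0),
        (T ((j : ℤ) - (conj ν.part j : ℤ)) - T (j : ℤ)))
      = (0 : LaurentPolynomial ℤ) := by
  set f := ν.part with hf
  set L := plen f with hL
  set m := f 0 with hm
  -- basic facts
  have hant : ∀ i j : ℕ, i ≤ j → f j ≤ f i := fun i j h => ν.antitone h
  have hplen : ∀ i, i < L ↔ f i ≠ 0 := plen_lt_iff ν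
  have hconj : ∀ j i, i < conj f j ↔ j < f i := conj_lt_iff ν
  have hconj_le : ∀ j, conj f j ≤ L := by
    intro j
    by_contra h
    have h1 : L < conj f j := Nat.lt_of_not_le h
    have := (hconj j L).mp h1
    have := (hplen L).mpr (by omega)
    omega
  have hconj_anti : ∀ j j' : ℕ, j ≤ j' → conj f j' ≤ conj f j := by
    intro j j' hjj
    by_contra h
    have h1 : conj f j < conj f j' := Nat.lt_of_not_le h
    have h2 := (hconj j' (conj f j)).mp h1
    have h3 := (hconj j (conj f j)).mpr (by omega)
    omega
  have hconj_pos : ∀ j, j < m → 1 ≤ conj f j := fun j hj =>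
    (hconj j 0).mpr hj
  have hf_pos : ∀ i, i < L → 1 ≤ f i := by
    intro i hi
    have := (hplen i).mp hi
    omega
  have hf_le : ∀ i, f i ≤ m := fun i => hant 0 i (Nat.zero_le i)
  -- the two exponent functions
  set e : ℕ ⊕ ℕ → ℤ :=
    Sum.elim (fun i => (f i : ℤ) - i - 1) (fun j => (j : ℤ) - conj f j) with he
  set e' : ℕ ⊕ ℕ → ℤ := Sum.elim (fun i => -(i : ℤ) - 1) (fun j => (j : ℤ)) with he'
  set s : Finset (ℕ ⊕ ℕ) := (Finset.range L).disjSum (Finset.range m) with hs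
  have hmeml : ∀ i : ℕ, Sum.inl i ∈ s ↔ i < L := by
    intro i; rw [hs, Finset.inl_mem_disjSum, Finset.mem_range]
  have hmemr : ∀ j : ℕ, Sum.inr j ∈ s ↔ j < m := by
    intro j; rw [hs, Finset.inr_mem_disjSum, Finset.mem_range]
  -- injectivity of e on s
  have hinj : ∀ x ∈ s, ∀ y ∈ s, e x = e y → x = y := by
    rintro (i | j) hx (i' | j') hy hxy <;>
      simp only [he, Sum.elim_inl, Sum.elim_inr] at hxy
    · rw [hmeml] at hx hy
      refine congrArg Sum.inl ?_
      rcases Nat.le_total i i' with h | h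
      · have := hant i i' h; omega
      · have := hant i' i h; omega
    · rw [hmeml] at hx; rw [hmemr] at hy
      exfalso
      have h1 := hconj j' i
      have := hf_pos i hx
      omega
    · rw [hmemr] at hx; rw [hmeml] at hy
      exfalso
      have h1 := hconj j i'
      have := hf_pos i' hy
      omega
    · rw [hmemr] at hx hy
      refine congrArg Sum.inr ?_
      rcases Nat.le_total j j' with h | h
      · have := hconj_anti j j' h; omega
      · have := hconj_anti j' j h; omega
  have hinj' : ∀ x ∈ s, ∀ y ∈ s, e' x = e' y → x = y := by
    rintro (i | j) hx (i' | j') hy hxy <;>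
      simp only [he', Sum.elim_inl, Sum.elim_inr] at hxy
    · exact congrArg Sum.inl (by omega)
    · exact absurd hxy (by omega)
    · exact absurd hxy (by omega)
    · exact congrArg Sum.inr (by omega)
  -- images
  set I : Finset ℤ := Finset.Icc (-(L : ℤ)) ((m : ℤ) - 1) with hI
  have himg' : s.image e' = I := by
    ext c
    rw [Finset.mem_image, hI, Finset.mem_Icc]
    constructor
    · rintro ⟨x, hx, rfl⟩
      rcases x with i | j
      · rw [hmeml] at hx
        simp only [he', Sum.elim_inl]
        omega
      · rw [hmemr] at hx
        simp only [he', Sum.elim_inr]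
        omega
    · rintro ⟨h1, h2⟩
      rcases lt_or_ge c 0 with hc | hc
      · refine ⟨Sum.inl (-c - 1).toNat, (hmeml _).mpr (by omega), ?_⟩
        simp only [he', Sum.elim_inl]; omega
      · refine ⟨Sum.inr c.toNat, (hmemr _).mpr (by omega), ?_⟩
        simp only [he', Sum.elim_inr]; omega
  have hsub : s.image e ⊆ I := by
    intro c hc
    rw [Finset.mem_image] at hc
    obtain ⟨x, hx, rfl⟩ := hc
    rw [hI, Finset.mem_Icc]
    rcases x with i | j
    · rw [hmeml] at hx
      simp only [he, Sum.elim_inl]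
      have := hf_pos i hx
      have := hf_le i
      omega
    · rw [hmemr] at hx
      simp only [he, Sum.elim_inr]
      have := hconj_pos j hx
      have := hconj_le j
      omega
  have hcards : (s.image e).card = I.card := by
    rw [Finset.card_image_of_injOn (fun x hx y hy => hinj x hx y hy)]
    simp only [hs, Finset.card_disjSum, Finset.card_range, hI, Int.card_Icc]
    omega
  have himg : s.image e = I := Finset.eq_of_subset_of_card_le hsub (le_of_eq hcards.symm)
  -- conclude
  have h1 : ∑ c ∈ s.image e, (T c : LaurentPolynomial ℤ) = ∑ x ∈ s, T (e x) :=
    Finset.sum_image hinj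
  have h2 : ∑ c ∈ s.image e', (T c : LaurentPolynomial ℤ) = ∑ x ∈ s, T (e' x) :=
    Finset.sum_image hinj'
  have key : (∑ x ∈ s, T (R := ℤ) (e x)) = ∑ x ∈ s, T (e' x) := by
    rw [← h1, ← h2, himg, himg']
  rw [hs, Finset.sum_disjSum, Finset.sum_disjSum] at key
  simp only [he, he', Sum.elim_inl, Sum.elim_inr] at key
  simp only [Finset.sum_sub_distrib]
  linear_combination key
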